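/- For a μ-strongly convex twice differentiable f, priors π, π′ ∈ (0,1), test cost c′ ∈ (0,1), and r : ℝ^d → [0,∞), the classifier h_{c₀} = sign(πr − c₀) with c₀ = c′π(1−π′) / ( (1−c′)(1−π)π′ + c′π(1−π′) ) satisfies R_{π′,c′}(h_{c₀}) − R*_{π′,c′} ≤ C √( (2/μ) B_f(r* ∥ r) ), where C = π (c′ + π′ − 2c′π′) / (c₀ + π − 2c₀π). -/

import Mathlib

open MeasureTheory Real

/-- The sign function mapping to `{±1}`. -/
noncomputable def sgn (x : ℝ) : ℝ := if 0 < x then 1 else -1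

/-- Cost-sensitive classification risk with class-prior `pr` and false-positive cost `c`,
for class-conditional distributions `Pp` (positive) and `Pm` (negative). -/
noncomputable def costRisk {d : ℕ} (Pp Pm : Measure (Fin d → ℝ)) (pr c : ℝ)
    (g : (Fin d → ℝ) → ℝ) : ℝ :=
  (1 - c) * pr * (Pp {x | sgn (g x) ≠ 1}).toReal
    + c * (1 - pr) * (Pm {x | sgn (g x) ≠ -1}).toReal

/-- Bayes-optimal cost-sensitive risk: infimum over all measurable decision functions. -/
noncomputable def bayesRisk {d : ℕ} (Pp Pm : Measure (Fin d → ℝ)) (pr c : ℝ) : ℝ :=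
  ⨅ g : {g : (Fin d → ℝ) → ℝ // Measurable g}, costRisk Pp Pm pr c g.1

/-- Bregman divergence `B_f(r* ∥ r)` weighted by the distribution `P`. -/
noncomputable def bregman {d : ℕ} (P : Measure (Fin d → ℝ)) (f : ℝ → ℝ)
    (rstar r : (Fin d → ℝ) → ℝ) : ℝ :=
  ∫ x, (f (rstar x) - f (r x) - deriv f (r x) * (rstar x - r x)) ∂P

section aux

lemma taylor_sc (f : ℝ → ℝ) (μ : ℝ) (hf : ContDiff ℝ 2 f)
    (hsc : ∀ t, 0 ≤ t → μ ≤ deriv (deriv f) t) {s t : ℝ} (hs : 0 ≤ s) (ht : 0 ≤ t) :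
    μ / 2 * (s - t) ^ 2 ≤ f s - f t - deriv f t * (s - t) := by
  have hd1 : Differentiable ℝ f := hf.differentiable (by norm_num)
  have hd2 : Differentiable ℝ (deriv f) := by
    have h := ((contDiff_succ_iff_deriv (n := 1)).mp (by exact_mod_cast hf)).2.2
    exact h.differentiable (by norm_num)
  set ψ : ℝ → ℝ := fun u => deriv f u - deriv f t - μ * (u - t) with hψ
  have hψd : ∀ u, HasDerivAt ψ (deriv (deriv f) u - μ) u := by
    intro u
    have h1 : HasDerivAt (fun u => deriv f u - deriv f t) (deriv (deriv f) u) u :=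
      ((hd2 u).hasDerivAt).sub_const _
    have h2 : HasDerivAt (fun u => μ * (u - t)) (μ * 1) u :=
      (((hasDerivAt_id u).sub_const t)).const_mul μ
    have h3 := h1.sub h2
    rw [mul_one] at h3
    exact h3
  have hψmono : MonotoneOn ψ (Set.Ici (0:ℝ)) := by
    apply monotoneOn_of_hasDerivWithinAt_nonneg (convex_Ici 0)
      (Continuous.continuousOn (by have := hd2.continuous; rw [hψ]; fun_prop))
      (fun u hu => (hψd u).hasDerivWithinAt)
    intro u hu
    rw [interior_Ici] at hu
    have := hsc u (le_of_lt hu)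
    linarith
  set φ : ℝ → ℝ := fun u => f u - deriv f t * u - μ / 2 * (u - t) ^ 2 with hφ
  have hφd : ∀ u, HasDerivAt φ (ψ u) u := by
    intro u
    have h1 : HasDerivAt (fun u => deriv f t * u) (deriv f t) u := by
      simpa using (hasDerivAt_id u).const_mul (deriv f t)
    have h2 : HasDerivAt (fun u => μ / 2 * (u - t) ^ 2) (μ / 2 * (2 * (u - t) ^ 1 * 1)) u :=
      (((hasDerivAt_id u).sub_const t).pow 2).const_mul (μ / 2)
    have := ((hd1 u).hasDerivAt.sub h1).sub h2
    refine HasDerivAt.congr_deriv this ?_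
    simp only [hψ]; ring
  have hφc : Continuous φ := by
    have := hd1.continuous
    fun_prop
  have hψt : ψ t = 0 := by simp [hψ]
  have key : φ t ≤ φ s := by
    rcases le_total t s with hts | hst
    · have hmono : MonotoneOn φ (Set.Icc t s) := by
        apply monotoneOn_of_hasDerivWithinAt_nonneg (convex_Icc t s) hφc.continuousOn
          (fun u hu => (hφd u).hasDerivWithinAt)
        intro u hu
        rw [interior_Icc] at hu
        have h0 : (0:ℝ) ≤ u := le_trans ht (le_of_lt hu.1)
        have := hψmono ht h0 (le_of_lt hu.1)
        linarith [hψt ▸ this]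
      exact hmono (Set.left_mem_Icc.mpr hts) (Set.right_mem_Icc.mpr hts) hts
    · have hmono : AntitoneOn φ (Set.Icc s t) := by
        apply antitoneOn_of_hasDerivWithinAt_nonpos (convex_Icc s t) hφc.continuousOn
          (fun u hu => (hφd u).hasDerivWithinAt)
        intro u hu
        rw [interior_Icc] at hu
        have h0 : (0:ℝ) ≤ u := le_trans hs (le_of_lt hu.1)
        have := hψmono h0 ht (le_of_lt hu.2)
        linarith [hψt ▸ this]
      exact hmono (Set.left_mem_Icc.mpr hst) (Set.right_mem_Icc.mpr hst) hst
  have : f t - deriv f t * t ≤ f s - deriv f t * s - μ / 2 * (s - t) ^ 2 := by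
    simpa [hφ] using key
  linarith

lemma abs_integral_le_sqrt {α : Type*} [MeasurableSpace α] (P : Measure α)
    [IsProbabilityMeasure P] (u : α → ℝ) (hu : AEStronglyMeasurable u P)
    (hsq : Integrable (fun x => (u x) ^ 2) P) :
    ∫ x, |u x| ∂P ≤ Real.sqrt (∫ x, (u x) ^ 2 ∂P) := by
  have habs : Integrable (fun x => |u x|) P := by
    apply Integrable.mono' (((hsq.add (integrable_const 1)).const_mul (1/2))) hu.norm
    filter_upwards with x
    simp only [norm_norm, Real.norm_eq_abs, Pi.add_apply, abs_abs]
    nlinarith [sq_nonneg (|u x| - 1), sq_abs (u x)]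
  set m := ∫ x, |u x| ∂P with hm
  have hm0 : 0 ≤ m := integral_nonneg fun x => abs_nonneg _
  have hnn : 0 ≤ ∫ x, (|u x| - m) ^ 2 ∂P := integral_nonneg fun x => sq_nonneg _
  have hexp : ∫ x, (|u x| - m) ^ 2 ∂P = ∫ x, (u x) ^ 2 ∂P - m ^ 2 := by
    have h1 : ∀ x, (|u x| - m) ^ 2 = (u x) ^ 2 - 2 * m * |u x| + m ^ 2 := by
      intro x; nlinarith [sq_abs (u x)]
    simp_rw [h1]
    rw [show (fun x => u x ^ 2 - 2 * m * |u x| + m ^ 2) = (fun x => (u x ^ 2 - 2 * m * |u x|) + m ^ 2) from rfl,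
      integral_add (show Integrable (fun x => u x ^ 2 - 2 * m * |u x|) P from hsq.sub (habs.const_mul (2*m))) (integrable_const _),
      integral_sub hsq (show Integrable (fun x => 2 * m * |u x|) P from habs.const_mul (2*m)), integral_const_mul, integral_const]
    simp [← hm]
    ring
  have hle : m ^ 2 ≤ ∫ x, (u x) ^ 2 ∂P := by rw [hexp] at hnn; linarith
  have h2 : 0 ≤ ∫ x, (u x) ^ 2 ∂P := integral_nonneg fun x => sq_nonneg _
  exact (Real.le_sqrt hm0 h2).mpr hle

end aux

set_option maxHeartbeats 2000000 in
/-- excess risk bound under class-prior shift. -/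
theorem excess_risk_prior_shift {d : ℕ} (Pp Pm P : Measure (Fin d → ℝ))
    [IsProbabilityMeasure Pp] [IsProbabilityMeasure Pm] [IsProbabilityMeasure P]
    (pr pr' c' μ : ℝ) (hpr : pr ∈ Set.Ioo (0:ℝ) 1) (hpr' : pr' ∈ Set.Ioo (0:ℝ) 1)
    (hc' : c' ∈ Set.Ioo (0:ℝ) 1) (hμ : 0 < μ)
    (f : ℝ → ℝ) (hf : ContDiff ℝ 2 f)
    (hsc : ∀ t, 0 ≤ t → μ ≤ deriv (deriv f) t)
    (rstar r : (Fin d → ℝ) → ℝ) (hrstar : Measurable rstar) (hr : Measurable r)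
    (hrstar0 : ∀ x, 0 ≤ rstar x) (hr0 : ∀ x, 0 ≤ r x)
    (hmix : P = ENNReal.ofReal pr • Pp + ENNReal.ofReal (1 - pr) • Pm)
    (hratio : ∀ S : Set (Fin d → ℝ), MeasurableSet S →
      (Pp S).toReal = ∫ x in S, rstar x ∂P)
    (hint : Integrable
      (fun x => f (rstar x) - f (r x) - deriv f (r x) * (rstar x - r x)) P)
    (c0 C : ℝ)
    (hc0 : c0 = c' * pr * (1 - pr') / ((1 - c') * (1 - pr) * pr' + c' * pr * (1 - pr')))
    (hC : C = pr * (c' + pr' - 2 * c' * pr') / (c0 + pr - 2 * c0 * pr)) :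
    costRisk Pp Pm pr' c' (fun x => pr * r x - c0) - bayesRisk Pp Pm pr' c'
      ≤ C * Real.sqrt ((2 / μ) * bregman P f rstar r) := by
  obtain ⟨hpr0, hpr1⟩ := hpr
  obtain ⟨hpr'0, hpr'1⟩ := hpr'
  obtain ⟨hc'0, hc'1⟩ := hc'
  have h1pr : (0:ℝ) < 1 - pr := by linarith
  set a : ℝ := (1 - c') * pr' with ha
  set b : ℝ := c' * (1 - pr') with hb
  have ha0 : 0 < a := mul_pos (by linarith) hpr'0
  have hb0 : 0 < b := mul_pos hc'0 (by linarith)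
  have hD0 : 0 < a * (1 - pr) + b * pr := by positivity
  set K : ℝ := (a * (1 - pr) + b * pr) / (1 - pr) with hK
  have hK0 : 0 < K := div_pos hD0 h1pr
  have hc0' : c0 = pr * b / (a * (1 - pr) + b * pr) := by
    rw [hc0, ha, hb]; ring_nf
  have hab0 : 0 < a + b := by linarith
  have hden : c0 + pr - 2 * c0 * pr = pr * (1 - pr) * (a + b) / (a * (1 - pr) + b * pr) := by
    rw [hc0']; field_simp; ring
  have hCK : C = K := by
    rw [hC, hden, hK, show c' + pr' - 2 * c' * pr' = a + b from by rw [ha, hb]; ring]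
    rw [div_div_eq_mul_div, div_eq_div_iff (mul_pos (mul_pos hpr0 h1pr) hab0).ne' h1pr.ne']
    ring
  set t0 : ℝ := c0 / pr with ht0
  have hKt0 : K * t0 = b / (1 - pr) := by
    rw [ht0, hc0', hK]; field_simp
  have hIrstar : Integrable rstar P := by
    by_contra h
    have h2 := hratio Set.univ MeasurableSet.univ
    rw [setIntegral_univ, integral_undef h] at h2
    simp [measure_univ] at h2
  have hmixR : ∀ S : Set (Fin d → ℝ),
      (P S).toReal = pr * (Pp S).toReal + (1 - pr) * (Pm S).toReal := by
    intro S
    rw [hmix]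
    simp only [Measure.coe_add, Pi.add_apply, Measure.smul_apply, smul_eq_mul]
    rw [ENNReal.toReal_add (ENNReal.mul_ne_top ENNReal.ofReal_ne_top (measure_ne_top _ _))
      (ENNReal.mul_ne_top ENNReal.ofReal_ne_top (measure_ne_top _ _)),
      ENNReal.toReal_mul, ENNReal.toReal_mul, ENNReal.toReal_ofReal hpr0.le,
      ENNReal.toReal_ofReal (by linarith)]
  set ψ : (Fin d → ℝ) → ℝ := fun x => K * (rstar x - t0) with hψdef
  have hIψ : Integrable ψ P := (hIrstar.sub (integrable_const t0)).const_mul K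
  have hG : ∀ S : Set (Fin d → ℝ), MeasurableSet S →
      a * (Pp S).toReal - b * (Pm S).toReal = ∫ x in S, ψ x ∂P := by
    intro S hS
    have hint1 : ∫ x in S, ψ x ∂P = K * (∫ x in S, rstar x ∂P) - K * t0 * (P S).toReal := by
      have hrw : ψ = fun x => K * rstar x - K * t0 := by
        funext x; simp only [hψdef]; ring
      rw [hrw, integral_sub ((hIrstar.restrict).const_mul K) (integrable_const _),
        integral_const_mul, setIntegral_const, smul_eq_mul]
      rw [measureReal_def]; ring
    rw [hint1, ← hratio S hS, hKt0, hmixR S, hK]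
    field_simp
    ring
  have hcr : ∀ g : (Fin d → ℝ) → ℝ, Measurable g →
      costRisk Pp Pm pr' c' g
        = a - (a * (Pp {x | 0 < g x}).toReal - b * (Pm {x | 0 < g x}).toReal) := by
    intro g hg
    have hSg : MeasurableSet {x | 0 < g x} := measurableSet_lt measurable_const hg
    have hset1 : {x | sgn (g x) ≠ 1} = {x | 0 < g x}ᶜ := by
      ext x
      by_cases h : 0 < g x
      · simp [sgn, h] <;> norm_num
      · simp [sgn, h, not_lt.mp h] <;> norm_num
    have hset2 : {x | sgn (g x) ≠ -1} = {x | 0 < g x} := by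
      ext x
      by_cases h : 0 < g x
      · simp [sgn, h] <;> norm_num
      · simp [sgn, h, not_lt.mp h] <;> norm_num
    have hcompl : (Pp {x | 0 < g x}ᶜ).toReal = 1 - (Pp {x | 0 < g x}).toReal := by
      rw [measure_compl hSg (measure_ne_top _ _),
        ENNReal.toReal_sub_of_le (measure_mono (Set.subset_univ _)) (measure_ne_top _ _)]
      simp [measure_univ]
    unfold costRisk
    rw [hset1, hset2, hcompl, ← ha, ← hb]
    ring
  have hDpt : ∀ x, μ / 2 * (rstar x - r x) ^ 2
      ≤ f (rstar x) - f (r x) - deriv f (r x) * (rstar x - r x) :=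
    fun x => taylor_sc f μ hf hsc (hrstar0 x) (hr0 x)
  have h2μ : (0:ℝ) < 2 / μ := by positivity
  have hsq : Integrable (fun x => (rstar x - r x) ^ 2) P := by
    apply Integrable.mono' (hint.const_mul (2/μ))
      (((hrstar.sub hr).pow_const 2).aestronglyMeasurable)
    filter_upwards with x
    rw [Real.norm_eq_abs, abs_of_nonneg (sq_nonneg _)]
    have h1 := mul_le_mul_of_nonneg_left (hDpt x) h2μ.le
    have h2 : (2/μ) * (μ/2 * (rstar x - r x) ^ 2) = (rstar x - r x) ^ 2 := by
      field_simp
    simp only [Pi.sub_apply]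
    linarith
  have habs : Integrable (fun x => |rstar x - r x|) P := by
    apply Integrable.mono' ((hsq.add (integrable_const 1)).const_mul (1/2))
      ((hrstar.sub hr).aestronglyMeasurable.norm)
    filter_upwards with x
    simp only [norm_norm, Real.norm_eq_abs, abs_abs, Pi.add_apply, Pi.sub_apply]
    nlinarith [sq_nonneg (|rstar x - r x| - 1), sq_abs (rstar x - r x)]
  have hCS : ∫ x, |rstar x - r x| ∂P ≤ Real.sqrt (∫ x, (rstar x - r x) ^ 2 ∂P) :=
    abs_integral_le_sqrt P (fun x => rstar x - r x) (hrstar.sub hr).aestronglyMeasurable hsq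
  have hB1 : ∫ x, μ/2 * (rstar x - r x) ^ 2 ∂P ≤ bregman P f rstar r :=
    integral_mono (hsq.const_mul (μ/2)) hint hDpt
  have hB : ∫ x, (rstar x - r x) ^ 2 ∂P ≤ (2/μ) * bregman P f rstar r := by
    rw [integral_const_mul] at hB1
    have h3 : (2/μ) * (μ/2 * ∫ x, (rstar x - r x) ^ 2 ∂P)
        = ∫ x, (rstar x - r x) ^ 2 ∂P := by field_simp
    linarith [mul_le_mul_of_nonneg_left hB1 h2μ.le]
  have hfin : K * ∫ x, |rstar x - r x| ∂P
      ≤ C * Real.sqrt ((2/μ) * bregman P f rstar r) := by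
    rw [hCK]
    exact mul_le_mul_of_nonneg_left (hCS.trans (Real.sqrt_le_sqrt hB)) hK0.le
  have hmeash : Measurable (fun x => pr * r x - c0) := (hr.const_mul pr).sub measurable_const
  have hper : ∀ g : {g : (Fin d → ℝ) → ℝ // Measurable g},
      costRisk Pp Pm pr' c' (fun x => pr * r x - c0)
        - C * Real.sqrt ((2/μ) * bregman P f rstar r) ≤ costRisk Pp Pm pr' c' g.1 := by
    rintro ⟨g, hg⟩
    have hSg : MeasurableSet {x | 0 < g x} := measurableSet_lt measurable_const hg
    have hSh : MeasurableSet {x | 0 < pr * r x - c0} := measurableSet_lt measurable_const hmeash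
    have key : (∫ x in {x | 0 < g x}, ψ x ∂P) - (∫ x in {x | 0 < pr * r x - c0}, ψ x ∂P)
        ≤ K * ∫ x, |rstar x - r x| ∂P := by
      rw [← integral_indicator hSg, ← integral_indicator hSh,
        ← integral_sub (hIψ.indicator hSg) (hIψ.indicator hSh), ← integral_const_mul]
      apply integral_mono (Integrable.sub (hIψ.indicator hSg) (hIψ.indicator hSh))
        (habs.const_mul K)
      intro x
      simp only [Pi.sub_apply, Set.indicator_apply, Set.mem_setOf_eq]
      by_cases h1 : 0 < g x <;> by_cases h2 : 0 < pr * r x - c0 <;>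
        simp only [h1, h2, if_true, if_false]
      · have : (0:ℝ) ≤ K * |rstar x - r x| := by positivity
        linarith
      · have hrx : r x ≤ t0 := by
          rw [ht0, le_div_iff₀ hpr0]
          nlinarith [not_lt.mp h2]
        have h3 : rstar x - t0 ≤ |rstar x - r x| :=
          le_trans (by linarith) (le_abs_self _)
        have := mul_le_mul_of_nonneg_left h3 hK0.le
        simp only [hψdef]
        linarith
      · have hrx : t0 < r x := by
          rw [ht0, div_lt_iff₀ hpr0]
          nlinarith
        have h3 : t0 - rstar x ≤ |rstar x - r x| := by
          rw [abs_sub_comm]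
          exact le_trans (by linarith) (le_abs_self _)
        have := mul_le_mul_of_nonneg_left h3 hK0.le
        simp only [hψdef]
        linarith
      · have : (0:ℝ) ≤ K * |rstar x - r x| := by positivity
        linarith
    rw [hcr g hg, hcr (fun x => pr * r x - c0) hmeash, hG _ hSg, hG _ hSh]
    linarith
  haveI : Nonempty {g : (Fin d → ℝ) → ℝ // Measurable g} :=
    ⟨⟨fun _ => (1:ℝ), measurable_const⟩⟩
  have hlow : costRisk Pp Pm pr' c' (fun x => pr * r x - c0)
      - C * Real.sqrt ((2/μ) * bregman P f rstar r) ≤ bayesRisk Pp Pm pr' c' :=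
    le_ciInf hper
  linarith
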